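/- Let $0 < y \le 1$, $a = (1-\sqrt{y})^2$, $b = (1+\sqrt{y})^2$. Then $\int_a^b \frac{\rho_{MP,y}(x)}{x - b}\,dx = -\frac{1}{\sqrt{y} + y}$, i.e., $y\int_a^b \frac{x\,\rho_{MP,y}(x)}{x - b}\,dx = y\left(1 - (1+\sqrt{y})^2 \frac{1}{\sqrt{y}+y}\right) = -\sqrt{y}$. -/

import Mathlib

open Real MeasureTheory intervalIntegral Set

private lemma mp_intable (a b : ℝ) :
    IntervalIntegrable (fun x : ℝ => (b - x) ^ (-(1/2) : ℝ)) volume a b := by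
  have h : IntervalIntegrable (fun x : ℝ => x ^ (-(1/2) : ℝ)) volume (b - a) (b - b) :=
    intervalIntegral.intervalIntegrable_rpow' (by norm_num)
  simpa using h.comp_sub_left b

private lemma mp_sqrt_one_sub_sq {a b x : ℝ} (hab : a < b) (hx : x ∈ Set.Ioo a b) :
    Real.sqrt (1 - ((2*x-a-b)/(b-a))^2) = 2 * Real.sqrt ((b-x)*(x-a)) / (b-a) := by
  have hQ : 0 < (b-x)*(x-a) := mul_pos (by linarith [hx.2]) (by linarith [hx.1])
  have hba : (0:ℝ) < b - a := by linarith
  have h1 : 1 - ((2*x-a-b)/(b-a))^2 = (2 * Real.sqrt ((b-x)*(x-a)) / (b-a))^2 := by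
    have h2 : (2 * Real.sqrt ((b-x)*(x-a)) / (b-a))^2 = 4*((b-x)*(x-a))/(b-a)^2 := by
      rw [div_pow, mul_pow, Real.sq_sqrt hQ.le]; norm_num
    rw [h2]
    field_simp
    ring
  rw [h1, Real.sqrt_sq (by positivity)]

private lemma mp_core2 (a b : ℝ) (hab : a < b) :
    ∫ x in a..b, (x - a) / Real.sqrt ((b-x)*(x-a)) = (b-a) * π / 2 := by
  have hba : (0:ℝ) < b - a := by linarith
  have hcont : ContinuousOn
      (fun x => ((b-a)/2) * Real.arcsin ((2*x-a-b)/(b-a)) - Real.sqrt ((b-x)*(x-a)))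
      (Set.Icc a b) := by
    apply Continuous.continuousOn
    exact (continuous_const.mul (Real.continuous_arcsin.comp
        ((((continuous_const.mul continuous_id).sub continuous_const).sub
          continuous_const).div_const _))).sub
      (Real.continuous_sqrt.comp ((continuous_const.sub continuous_id).mul
        (continuous_id.sub continuous_const)))
  have hderiv : ∀ x ∈ Set.Ioo a b,
      HasDerivAt (fun x => ((b-a)/2) * Real.arcsin ((2*x-a-b)/(b-a)) - Real.sqrt ((b-x)*(x-a)))
        ((x - a) / Real.sqrt ((b-x)*(x-a))) x := by
    intro x hx
    have hQ : 0 < (b-x)*(x-a) := mul_pos (by linarith [hx.2]) (by linarith [hx.1])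
    have ht : 0 < Real.sqrt ((b-x)*(x-a)) := Real.sqrt_pos.2 hQ
    have hne1 : (2*x-a-b)/(b-a) ≠ -1 := by
      intro h
      rw [div_eq_iff hba.ne'] at h
      have := hx.1; nlinarith
    have hne2 : (2*x-a-b)/(b-a) ≠ 1 := by
      intro h
      rw [div_eq_iff hba.ne'] at h
      have := hx.2; nlinarith
    have hlin : HasDerivAt (fun x : ℝ => (2*x-a-b)/(b-a)) (2/(b-a)) x := by
      simpa using ((((hasDerivAt_id x).const_mul 2).sub_const a).sub_const b).div_const (b-a)
    have harc : HasDerivAt (fun x : ℝ => Real.arcsin ((2*x-a-b)/(b-a)))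
        (1 / Real.sqrt (1 - ((2*x-a-b)/(b-a))^2) * (2/(b-a))) x :=
      (Real.hasDerivAt_arcsin hne1 hne2).comp (h₂ := Real.arcsin) x hlin
    have hv : HasDerivAt (fun x : ℝ => (b-x)*(x-a)) (a + b - 2*x) x := by
      have := ((hasDerivAt_id x).const_sub b).mul ((hasDerivAt_id x).sub_const a)
      refine this.congr_deriv ?_
      simp only [id_eq]
      ring
    have hsq : HasDerivAt (fun x : ℝ => Real.sqrt ((b-x)*(x-a)))
        (1/(2 * Real.sqrt ((b-x)*(x-a))) * (a + b - 2*x)) x :=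
      (Real.hasDerivAt_sqrt hQ.ne').comp x hv
    have htot := (harc.const_mul ((b-a)/2)).sub hsq
    refine htot.congr_deriv ?_
    rw [mp_sqrt_one_sub_sq hab hx]
    field_simp
    ring
  have hint : IntervalIntegrable (fun x => (x - a) / Real.sqrt ((b-x)*(x-a))) volume a b := by
    apply ((mp_intable a b).const_mul (Real.sqrt (b-a))).mono_fun'
    · apply Measurable.aestronglyMeasurable
      exact (measurable_id.sub_const a).div
        (Real.continuous_sqrt.measurable.comp ((measurable_const.sub measurable_id).mul
          (measurable_id.sub_const a)))
    · filter_upwards [self_mem_ae_restrict measurableSet_uIoc] with x hx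
      rw [Set.uIoc_of_le hab.le] at hx
      have hax : a < x := hx.1
      have hxb : x ≤ b := hx.2
      have h1 : Real.sqrt ((b-x)*(x-a)) = Real.sqrt (b-x) * Real.sqrt (x-a) :=
        Real.sqrt_mul (by linarith) _
      have h2 : (b-x) ^ (-(1/2):ℝ) = (Real.sqrt (b-x))⁻¹ := by
        rw [Real.rpow_neg (by linarith), ← Real.sqrt_eq_rpow]
      have h3 : (x-a)/(Real.sqrt (b-x) * Real.sqrt (x-a))
          = Real.sqrt (x-a) * (Real.sqrt (b-x))⁻¹ := by
        rw [mul_comm, ← div_div, Real.div_sqrt, div_eq_mul_inv]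
      rw [h1, h2, h3, Real.norm_eq_abs, abs_of_nonneg (by positivity)]
      exact mul_le_mul_of_nonneg_right (Real.sqrt_le_sqrt (by linarith))
        (by positivity)
  rw [intervalIntegral.integral_eq_sub_of_hasDeriv_right_of_le hab.le hcont
      (fun x hx => (hderiv x hx).hasDerivWithinAt) hint]
  have e1 : (2*b-a-b)/(b-a) = 1 := by
    rw [div_eq_one_iff_eq hba.ne']; ring
  have e2 : (2*a-a-b)/(b-a) = -1 := by
    rw [div_eq_iff hba.ne']; ring
  rw [e1, e2, Real.arcsin_one, Real.arcsin_neg_one]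
  rw [show (b-b)*(b-a) = 0 by ring, show (b-a)*(a-a) = 0 by ring, Real.sqrt_zero]
  ring

private lemma mp_core1 (sa sb : ℝ) (ha : 0 < sa) (hab : sa < sb) :
    ∫ x in (sa^2)..(sb^2), (x - sa^2) / (x * Real.sqrt ((sb^2-x)*(x-sa^2)))
      = π * (1 - sa/sb) := by
  have hb0 : (0:ℝ) < sb := lt_trans ha hab
  have hAB : sa^2 < sb^2 := by nlinarith
  have hba : (0:ℝ) < sb^2 - sa^2 := by linarith
  set A := sa^2 with hA
  set B := sb^2 with hB
  have hA0 : 0 < A := by positivity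
  have hcont : ContinuousOn
      (fun x => Real.arcsin ((2*x-A-B)/(B-A))
        - (sa/sb) * Real.arcsin (((A+B)*x - 2*(A*B))/((B-A)*x))) (Set.Icc A B) := by
    apply ContinuousOn.sub
    · apply Continuous.continuousOn
      exact Real.continuous_arcsin.comp
        ((((continuous_const.mul continuous_id).sub continuous_const).sub
          continuous_const).div_const _)
    · exact continuousOn_const.mul (Real.continuous_arcsin.comp_continuousOn
        (ContinuousOn.div (by fun_prop) (by fun_prop) (fun x hx => by
          have hx0 : 0 < x := lt_of_lt_of_le hA0 hx.1
          positivity)))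
  have hderiv : ∀ x ∈ Set.Ioo A B,
      HasDerivAt (fun x => Real.arcsin ((2*x-A-B)/(B-A))
          - (sa/sb) * Real.arcsin (((A+B)*x - 2*(A*B))/((B-A)*x)))
        ((x - A) / (x * Real.sqrt ((B-x)*(x-A)))) x := by
    intro x hx
    have hx0 : 0 < x := lt_trans hA0 hx.1
    have hQ : 0 < (B-x)*(x-A) := mul_pos (by linarith [hx.2]) (by linarith [hx.1])
    have ht : 0 < Real.sqrt ((B-x)*(x-A)) := Real.sqrt_pos.2 hQ
    have hne1 : (2*x-A-B)/(B-A) ≠ -1 := by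
      intro h
      rw [div_eq_iff hba.ne'] at h
      have := hx.1; nlinarith
    have hne2 : (2*x-A-B)/(B-A) ≠ 1 := by
      intro h
      rw [div_eq_iff hba.ne'] at h
      have := hx.2; nlinarith
    have hlin : HasDerivAt (fun x : ℝ => (2*x-A-B)/(B-A)) (2/(B-A)) x := by
      simpa using ((((hasDerivAt_id x).const_mul 2).sub_const A).sub_const B).div_const (B-A)
    have harc1 : HasDerivAt (fun x : ℝ => Real.arcsin ((2*x-A-B)/(B-A)))
        (1 / Real.sqrt (1 - ((2*x-A-B)/(B-A))^2) * (2/(B-A))) x :=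
      (Real.hasDerivAt_arcsin hne1 hne2).comp (h₂ := Real.arcsin) x hlin
    -- second arcsin term
    have hden : (B-A)*x ≠ 0 := by positivity
    have hw2sq : 1 - (((A+B)*x - 2*(A*B))/((B-A)*x))^2
        = 4*(sa*sb)^2*((B-x)*(x-A))/((B-A)*x)^2 := by
      field_simp
      rw [hA, hB]
      ring
    have hw2pos : 0 < 1 - (((A+B)*x - 2*(A*B))/((B-A)*x))^2 := by
      rw [hw2sq]
      apply div_pos (by positivity) (by positivity)
    have hw2lt : |((A+B)*x - 2*(A*B))/((B-A)*x)| < 1 :=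
      (sq_lt_one_iff_abs_lt_one _).1 (by linarith)
    have hw2ne1 : ((A+B)*x - 2*(A*B))/((B-A)*x) ≠ -1 := (abs_lt.1 hw2lt).1.ne'
    have hw2ne2 : ((A+B)*x - 2*(A*B))/((B-A)*x) ≠ 1 := (abs_lt.1 hw2lt).2.ne
    have hnum : HasDerivAt (fun x : ℝ => (A+B)*x - 2*(A*B)) (A+B) x := by
      simpa using ((hasDerivAt_id x).const_mul (A+B)).sub_const (2*(A*B))
    have hdenD : HasDerivAt (fun x : ℝ => (B-A)*x) (B-A) x := by
      simpa using (hasDerivAt_id x).const_mul (B-A)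
    have hw2deriv : HasDerivAt (fun x : ℝ => ((A+B)*x - 2*(A*B))/((B-A)*x))
        (((A+B) * ((B-A)*x) - ((A+B)*x - 2*(A*B)) * (B-A)) / ((B-A)*x)^2) x :=
      hnum.div hdenD hden
    have harc2 : HasDerivAt (fun x : ℝ => Real.arcsin (((A+B)*x - 2*(A*B))/((B-A)*x)))
        (1 / Real.sqrt (1 - (((A+B)*x - 2*(A*B))/((B-A)*x))^2)
          * (((A+B) * ((B-A)*x) - ((A+B)*x - 2*(A*B)) * (B-A)) / ((B-A)*x)^2)) x :=
      (Real.hasDerivAt_arcsin hw2ne1 hw2ne2).comp (h₂ := Real.arcsin) x hw2deriv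
    have hsqw2 : Real.sqrt (1 - (((A+B)*x - 2*(A*B))/((B-A)*x))^2)
        = 2*sa*sb*Real.sqrt ((B-x)*(x-A))/((B-A)*x) := by
      have h1 : (2*sa*sb*Real.sqrt ((B-x)*(x-A))/((B-A)*x))^2
          = 4*(sa*sb)^2*((B-x)*(x-A))/((B-A)*x)^2 := by
        rw [div_pow, mul_pow, Real.sq_sqrt hQ.le]
        ring
      rw [hw2sq, ← h1, Real.sqrt_sq (by positivity)]
    have htot := harc1.sub (harc2.const_mul (sa/sb))
    refine htot.congr_deriv ?_
    rw [hsqw2, mp_sqrt_one_sub_sq hAB hx]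
    field_simp
    rw [hA, hB]
    ring
  have hint : IntervalIntegrable (fun x => (x - A) / (x * Real.sqrt ((B-x)*(x-A))))
      volume A B := by
    apply ((mp_intable A B).const_mul (Real.sqrt (B-A) / A)).mono_fun'
    · apply Measurable.aestronglyMeasurable
      exact (measurable_id.sub_const A).div
        ((measurable_id.mul (Real.continuous_sqrt.measurable.comp
          ((measurable_const.sub measurable_id).mul (measurable_id.sub_const A)))))
    · filter_upwards [self_mem_ae_restrict measurableSet_uIoc] with x hx
      rw [Set.uIoc_of_le hAB.le] at hx
      have hax : A < x := hx.1
      have hxb : x ≤ B := hx.2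
      have h1 : Real.sqrt ((B-x)*(x-A)) = Real.sqrt (B-x) * Real.sqrt (x-A) :=
        Real.sqrt_mul (by linarith) _
      have h2 : (B-x) ^ (-(1/2):ℝ) = (Real.sqrt (B-x))⁻¹ := by
        rw [Real.rpow_neg (by linarith), ← Real.sqrt_eq_rpow]
      have hx0 : 0 < x := lt_trans hA0 hax
      rw [h1, h2, Real.norm_eq_abs, abs_of_nonneg (div_nonneg (by linarith)
        (mul_nonneg hx0.le (by positivity)))]
      rcases eq_or_lt_of_le hxb with h | h
      · rw [← h]
        simp
      · have hsx : 0 < Real.sqrt (B - x) := Real.sqrt_pos.2 (by linarith)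
        have e : (x-A)/(x * (Real.sqrt (B-x) * Real.sqrt (x-A)))
            = Real.sqrt (x-A) / (x * Real.sqrt (B-x)) := by
          rw [show x * (Real.sqrt (B-x) * Real.sqrt (x-A))
              = (x * Real.sqrt (B-x)) * Real.sqrt (x-A) by ring,
            div_mul_eq_div_div_swap, Real.div_sqrt]
        rw [e, ← div_eq_mul_inv, div_div]
        exact div_le_div₀ (Real.sqrt_nonneg _) (Real.sqrt_le_sqrt (by linarith))
          (by positivity) (mul_le_mul_of_nonneg_right hax.le (Real.sqrt_nonneg _))
  rw [intervalIntegral.integral_eq_sub_of_hasDeriv_right_of_le hAB.le hcont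
      (fun x hx => (hderiv x hx).hasDerivWithinAt) hint]
  have e1 : (2*B-A-B)/(B-A) = 1 := by
    rw [div_eq_one_iff_eq hba.ne']; ring
  have e2 : (2*A-A-B)/(B-A) = -1 := by
    rw [div_eq_iff hba.ne']; ring
  have hBne : (B-A)*B ≠ 0 := by positivity
  have hAne : (B-A)*A ≠ 0 := by positivity
  have e3 : ((A+B)*B - 2*(A*B))/((B-A)*B) = 1 := by
    rw [div_eq_one_iff_eq hBne]; ring
  have e4 : ((A+B)*A - 2*(A*B))/((B-A)*A) = -1 := by
    rw [div_eq_iff hAne]; ring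
  rw [e1, e2, e3, e4, Real.arcsin_one, Real.arcsin_neg_one]
  ring

private lemma mp_core0 :
    ∫ x in (0:ℝ)..4, x / (x * Real.sqrt ((4-x)*x)) = π := by
  have hcont : ContinuousOn (fun x : ℝ => Real.arcsin ((2*x-4)/4)) (Set.Icc 0 4) := by
    apply Continuous.continuousOn
    exact Real.continuous_arcsin.comp
      (((continuous_const.mul continuous_id).sub continuous_const).div_const _)
  have hderiv : ∀ x ∈ Set.Ioo (0:ℝ) 4,
      HasDerivAt (fun x : ℝ => Real.arcsin ((2*x-4)/4))
        (x / (x * Real.sqrt ((4-x)*x))) x := by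
    intro x hx
    have hQ : 0 < (4-x)*x := mul_pos (by linarith [hx.2]) hx.1
    have ht : 0 < Real.sqrt ((4-x)*x) := Real.sqrt_pos.2 hQ
    have hne1 : (2*x-4)/4 ≠ -1 := by
      intro h
      rw [div_eq_iff (by norm_num : (4:ℝ) ≠ 0)] at h
      have := hx.1; nlinarith
    have hne2 : (2*x-4)/4 ≠ 1 := by
      intro h
      rw [div_eq_iff (by norm_num : (4:ℝ) ≠ 0)] at h
      have := hx.2; nlinarith
    have hlin : HasDerivAt (fun x : ℝ => (2*x-4)/4) (2/4) x := by
      simpa using (((hasDerivAt_id x).const_mul 2).sub_const 4).div_const 4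
    have harc : HasDerivAt (fun x : ℝ => Real.arcsin ((2*x-4)/4))
        (1 / Real.sqrt (1 - ((2*x-4)/4)^2) * (2/4)) x :=
      (Real.hasDerivAt_arcsin hne1 hne2).comp (h₂ := Real.arcsin) x hlin
    convert harc using 1
    have h1 : 1 - ((2*x-4)/4)^2 = (Real.sqrt ((4-x)*x)/2)^2 := by
      have h2 : (Real.sqrt ((4-x)*x)/2)^2 = ((4-x)*x)/4 := by
        rw [div_pow, Real.sq_sqrt hQ.le]; norm_num
      rw [h2]
      field_simp
      ring
    rw [h1, Real.sqrt_sq (by positivity), div_mul_eq_div_div, div_self hx.1.ne',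
      one_div_div]
    ring
  have hint : IntervalIntegrable (fun x : ℝ => x / (x * Real.sqrt ((4-x)*x)))
      volume 0 4 := by
    have hg : IntervalIntegrable
        (fun x : ℝ => (Real.sqrt 2)⁻¹ * (x ^ (-(1/2):ℝ) + (4 - x) ^ (-(1/2):ℝ)))
        volume 0 4 :=
      ((intervalIntegral.intervalIntegrable_rpow' (by norm_num)).add
        (mp_intable 0 4)).const_mul _
    apply hg.mono_fun'
    · apply Measurable.aestronglyMeasurable
      exact measurable_id.div
        (measurable_id.mul (Real.continuous_sqrt.measurable.comp
          ((measurable_const.sub measurable_id).mul measurable_id)))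
    · filter_upwards [self_mem_ae_restrict measurableSet_uIoc] with x hx
      rw [Set.uIoc_of_le (by norm_num : (0:ℝ) ≤ 4)] at hx
      have hx0 : 0 < x := hx.1
      have hxb : x ≤ 4 := hx.2
      have h1 : Real.sqrt ((4-x)*x) = Real.sqrt (4-x) * Real.sqrt x :=
        Real.sqrt_mul (by linarith) _
      have h2 : (4-x) ^ (-(1/2):ℝ) = (Real.sqrt (4-x))⁻¹ := by
        rw [Real.rpow_neg (by linarith), ← Real.sqrt_eq_rpow]
      have h3 : x ^ (-(1/2):ℝ) = (Real.sqrt x)⁻¹ := by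
        rw [Real.rpow_neg hx0.le, ← Real.sqrt_eq_rpow]
      rw [h1, h2, h3, Real.norm_eq_abs, abs_of_nonneg (div_nonneg hx0.le
        (mul_nonneg hx0.le (by positivity)))]
      rcases eq_or_lt_of_le hxb with h | h
      · rw [← h]
        simp
      · have hsx : 0 < Real.sqrt (4 - x) := Real.sqrt_pos.2 (by linarith)
        have hsx0 : 0 < Real.sqrt x := Real.sqrt_pos.2 hx0
        have e : x / (x * (Real.sqrt (4-x) * Real.sqrt x))
            = (Real.sqrt (4-x) * Real.sqrt x)⁻¹ := by
          rw [div_mul_eq_div_div, div_self hx0.ne', one_div]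
        rw [e]
        have hs2 : 0 < Real.sqrt 2 := by positivity
        rcases le_total x 2 with hc | hc
        · have k1 : (Real.sqrt (4-x) * Real.sqrt x)⁻¹ ≤ (Real.sqrt 2 * Real.sqrt x)⁻¹ := by
            apply inv_anti₀ (by positivity)
            exact mul_le_mul_of_nonneg_right (Real.sqrt_le_sqrt (by linarith))
              (Real.sqrt_nonneg _)
          calc (Real.sqrt (4-x) * Real.sqrt x)⁻¹ ≤ (Real.sqrt 2 * Real.sqrt x)⁻¹ := k1
            _ = (Real.sqrt 2)⁻¹ * (Real.sqrt x)⁻¹ := by rw [mul_inv]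
            _ ≤ (Real.sqrt 2)⁻¹ * ((Real.sqrt x)⁻¹ + (Real.sqrt (4-x))⁻¹) := by
                apply mul_le_mul_of_nonneg_left _ (by positivity)
                exact le_add_of_nonneg_right (by positivity)
        · have k1 : (Real.sqrt (4-x) * Real.sqrt x)⁻¹ ≤ (Real.sqrt (4-x) * Real.sqrt 2)⁻¹ := by
            apply inv_anti₀ (by positivity)
            exact mul_le_mul_of_nonneg_left (Real.sqrt_le_sqrt (by linarith))
              (Real.sqrt_nonneg _)
          calc (Real.sqrt (4-x) * Real.sqrt x)⁻¹ ≤ (Real.sqrt (4-x) * Real.sqrt 2)⁻¹ := k1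
            _ = (Real.sqrt 2)⁻¹ * (Real.sqrt (4-x))⁻¹ := by rw [mul_inv, mul_comm]
            _ ≤ (Real.sqrt 2)⁻¹ * ((Real.sqrt x)⁻¹ + (Real.sqrt (4-x))⁻¹) := by
                apply mul_le_mul_of_nonneg_left _ (by positivity)
                exact le_add_of_nonneg_left (by positivity)
  rw [intervalIntegral.integral_eq_sub_of_hasDeriv_right_of_le (by norm_num) hcont
      (fun x hx => (hderiv x hx).hasDerivWithinAt) hint]
  norm_num [Real.arcsin_one, Real.arcsin_neg_one]

private lemma mp_key {a b x : ℝ} (hax : a < x) (hxb : x < b) :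
    Real.sqrt ((b-x)*(x-a)) / (x - b) = -((x - a) / Real.sqrt ((b-x)*(x-a))) := by
  have hQ : 0 < (b-x)*(x-a) := mul_pos (by linarith) (by linarith)
  have ht : 0 < Real.sqrt ((b-x)*(x-a)) := Real.sqrt_pos.2 hQ
  have ht2 : Real.sqrt ((b-x)*(x-a)) * Real.sqrt ((b-x)*(x-a)) = (b-x)*(x-a) :=
    Real.mul_self_sqrt hQ.le
  have hxb' : x - b ≠ 0 := sub_ne_zero_of_ne hxb.ne
  rw [← neg_div, div_eq_div_iff hxb' ht.ne']
  linear_combination ht2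

private lemma mp_ptwise1 {y a b x : ℝ} (hy : 0 < y) (hx0 : 0 < x) (hax : a < x)
    (hxb : x < b) :
    ((1 / (2 * Real.pi * x * y)) * Real.sqrt ((b-x)*(x-a))) / (x - b)
      = -(1/(2*Real.pi*y)) * ((x - a) / (x * Real.sqrt ((b-x)*(x-a)))) := by
  have hQ : 0 < (b-x)*(x-a) := mul_pos (by linarith) (by linarith)
  have ht : 0 < Real.sqrt ((b-x)*(x-a)) := Real.sqrt_pos.2 hQ
  have hx' : x ≠ 0 := hx0.ne'
  have hy' : y ≠ 0 := hy.ne'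
  have ht' : Real.sqrt ((b-x)*(x-a)) ≠ 0 := ht.ne'
  rw [mul_div_assoc, mp_key hax hxb]
  field_simp

private lemma mp_ptwise2 {y a b x : ℝ} (hy : 0 < y) (hx0 : 0 < x) (hax : a < x)
    (hxb : x < b) :
    (x * ((1 / (2 * Real.pi * x * y)) * Real.sqrt ((b-x)*(x-a)))) / (x - b)
      = -(1/(2*Real.pi*y)) * ((x - a) / Real.sqrt ((b-x)*(x-a))) := by
  have hQ : 0 < (b-x)*(x-a) := mul_pos (by linarith) (by linarith)
  have ht : 0 < Real.sqrt ((b-x)*(x-a)) := Real.sqrt_pos.2 hQ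
  rw [mul_div_assoc, mul_div_assoc, mp_key hax hxb]
  field_simp

private lemma mp_ae_ne (b : ℝ) : ∀ᵐ (x : ℝ), x ≠ b := by
  refine MeasureTheory.ae_iff.mpr ?_
  simp only [ne_eq, not_not, Set.setOf_eq_eq_singleton]
  exact measure_singleton b



/-- Integral of the Marchenko–Pastur density against `(x - b)⁻¹` at the right edge `b`:
`∫ ρ(x)/(x-b) dx = -1/(√y + y)`, and consequently
`y ∫ x ρ(x)/(x-b) dx = y (1 - (1+√y)² /(√y+y)) = -√y`. -/
theorem marchenko_pastur_integral_right_edge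
    (y : ℝ) (hy0 : 0 < y) (hy1 : y ≤ 1) :
    (∫ x in ((1 - Real.sqrt y) ^ 2)..((1 + Real.sqrt y) ^ 2),
        ((1 / (2 * Real.pi * x * y)) *
            Real.sqrt (((1 + Real.sqrt y) ^ 2 - x) * (x - (1 - Real.sqrt y) ^ 2))) /
          (x - (1 + Real.sqrt y) ^ 2) = -(1 / (Real.sqrt y + y))) ∧
    (y * ∫ x in ((1 - Real.sqrt y) ^ 2)..((1 + Real.sqrt y) ^ 2),
        (x * ((1 / (2 * Real.pi * x * y)) *
            Real.sqrt (((1 + Real.sqrt y) ^ 2 - x) * (x - (1 - Real.sqrt y) ^ 2)))) /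
          (x - (1 + Real.sqrt y) ^ 2) = -Real.sqrt y) ∧
    y * (1 - (1 + Real.sqrt y) ^ 2 * (1 / (Real.sqrt y + y))) = -Real.sqrt y := by
  set s := Real.sqrt y with hs_def
  have hs : 0 < s := Real.sqrt_pos.2 hy0
  have hsy : s^2 = y := Real.sq_sqrt hy0.le
  have hs1 : s ≤ 1 := by
    rw [hs_def, show (1:ℝ) = Real.sqrt 1 by simp]
    exact Real.sqrt_le_sqrt hy1
  have ha0 : (0:ℝ) ≤ (1-s)^2 := sq_nonneg _
  have hab : (1-s)^2 < (1+s)^2 := by nlinarith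
  have hae : ∀ᵐ (x : ℝ), x ≠ (1+s)^2 := mp_ae_ne _
  refine ⟨?_, ?_, ?_⟩
  · -- first integral
    have hI1 : (∫ x in ((1-s)^2)..((1+s)^2),
        ((1 / (2 * Real.pi * x * y)) * Real.sqrt (((1+s)^2 - x)*(x - (1-s)^2)))
          / (x - (1+s)^2))
        = -(1/(2*Real.pi*y)) * ∫ x in ((1-s)^2)..((1+s)^2),
            (x - (1-s)^2)/(x * Real.sqrt (((1+s)^2-x)*(x-(1-s)^2))) := by
      rw [← intervalIntegral.integral_const_mul]
      apply intervalIntegral.integral_congr_ae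
      filter_upwards [hae] with x hxb hx
      rw [Set.uIoc_of_le hab.le] at hx
      have hx1 : (1-s)^2 < x := hx.1
      have hx2 : x < (1+s)^2 := lt_of_le_of_ne hx.2 hxb
      exact mp_ptwise1 hy0 (lt_of_le_of_lt ha0 hx1) hx1 hx2
    rw [hI1]
    rcases lt_or_eq_of_le hs1 with hlt | heq
    · rw [mp_core1 (1-s) (1+s) (by linarith) (by linarith)]
      rw [← hsy]
      have h1s : (1:ℝ) + s ≠ 0 := by positivity
      field_simp
      ring
    · have hy1' : y = 1 := by rw [← hsy, heq]; norm_num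
      rw [heq, hy1']
      norm_num
      rw [mp_core0]
      field_simp
  · -- second integral
    have hI2 : (∫ x in ((1-s)^2)..((1+s)^2),
        (x * ((1 / (2 * Real.pi * x * y)) * Real.sqrt (((1+s)^2 - x)*(x - (1-s)^2))))
          / (x - (1+s)^2))
        = -(1/(2*Real.pi*y)) * ∫ x in ((1-s)^2)..((1+s)^2),
            (x - (1-s)^2)/(Real.sqrt (((1+s)^2-x)*(x-(1-s)^2))) := by
      rw [← intervalIntegral.integral_const_mul]
      apply intervalIntegral.integral_congr_ae
      filter_upwards [hae] with x hxb hx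
      rw [Set.uIoc_of_le hab.le] at hx
      have hx1 : (1-s)^2 < x := hx.1
      have hx2 : x < (1+s)^2 := lt_of_le_of_ne hx.2 hxb
      exact mp_ptwise2 hy0 (lt_of_le_of_lt ha0 hx1) hx1 hx2
    rw [hI2, mp_core2 _ _ hab]
    rw [show ((1+s)^2-(1-s)^2) = 4*s by ring]
    field_simp
    ring
  · -- algebraic identity
    rw [← hsy]
    have hss : s + s^2 ≠ 0 := by positivity
    field_simp
    ring
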